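/- The derivative of the matrix exponential exp(Ωt) with respect to a parameter p, when Ω depends smoothly on p, admits the integral representation ∂ₚ exp(Ωt) = ∫₀ᵗ exp(Ωτ) (∂ₚΩ) exp(Ω(t−τ)) dτ. -/

import Mathlib

open Matrix

attribute [local instance] Matrix.linftyOpNormedRing Matrix.linftyOpNormedAlgebra

section Aux

variable {n : ℕ}

/-- Duhamel-type identity: `exp(t•A) - exp(t•B) = ∫₀ᵗ exp(τ•A)(A-B)exp((t-τ)•B) dτ`. -/
lemma exp_sub_exp_eq_integral (A B : Matrix (Fin n) (Fin n) ℝ) (t : ℝ) :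
    NormedSpace.exp (t • A) - NormedSpace.exp (t • B) =
      ∫ τ in (0:ℝ)..t,
        NormedSpace.exp (τ • A) * (A - B) * NormedSpace.exp ((t - τ) • B) := by
  have hcont : Continuous fun τ : ℝ =>
      NormedSpace.exp (τ • A) * (A - B) * NormedSpace.exp ((t - τ) • B) :=
    ((NormedSpace.exp_continuous.comp (by fun_prop)).mul continuous_const).mul
      (NormedSpace.exp_continuous.comp (by fun_prop))
  have hderiv : ∀ τ : ℝ, HasDerivAt
      (fun τ : ℝ => NormedSpace.exp (τ • A) * NormedSpace.exp ((t - τ) • B))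
      (NormedSpace.exp (τ • A) * (A - B) * NormedSpace.exp ((t - τ) • B)) τ := by
    intro τ
    have h1 : HasDerivAt (fun τ : ℝ => NormedSpace.exp (τ • A))
        (NormedSpace.exp (τ • A) * A) τ := hasDerivAt_exp_smul_const A τ
    have h2 : HasDerivAt (fun τ : ℝ => NormedSpace.exp ((t - τ) • B))
        ((-1 : ℝ) • (NormedSpace.exp ((t - τ) • B) * B)) τ := by
      have hf : HasDerivAt (fun τ : ℝ => t - τ) (-1 : ℝ) τ := by
        simpa using (hasDerivAt_id τ).const_sub t
      exact (hasDerivAt_exp_smul_const B (t - τ)).scomp τ hf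
    have := h1.mul h2
    refine this.congr_deriv (Eq.symm ?_)
    have hc : Commute B (NormedSpace.exp ((t - τ) • B)) :=
      ((Commute.refl B).smul_right (t - τ)).exp_right
    simp only [neg_one_smul, mul_neg]
    rw [mul_assoc (NormedSpace.exp (τ • A)), ← hc.eq]
    noncomm_ring
  have hFTC := intervalIntegral.integral_eq_sub_of_hasDerivAt
    (f := fun τ : ℝ => NormedSpace.exp (τ • A) * NormedSpace.exp ((t - τ) • B))
    (fun τ _ => hderiv τ) (hcont.intervalIntegrable 0 t)
  rw [hFTC]
  simp [NormedSpace.exp_zero]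

end Aux

/-- The derivative of `p ↦ exp(t Ω(p))` with respect to the parameter `p`, when `Ω`
depends differentiably on `p`, is `∫₀ᵗ exp(τΩ) (∂ₚΩ) exp((t−τ)Ω) dτ`. -/
theorem deriv_exp_param_integral (n : ℕ) (Ω : ℝ → Matrix (Fin n) (Fin n) ℝ)
    (Ω' : Matrix (Fin n) (Fin n) ℝ) (p t : ℝ) (ht : 0 ≤ t)
    (hΩ : HasDerivAt Ω Ω' p) :
    HasDerivAt (fun q : ℝ => NormedSpace.exp (t • Ω q))
      (∫ τ in (0:ℝ)..t,
        NormedSpace.exp (τ • Ω p) * Ω' * NormedSpace.exp ((t - τ) • Ω p)) p := by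
  classical
  have hΦcont : Continuous (fun x : Matrix (Fin n) (Fin n) ℝ × Matrix (Fin n) (Fin n) ℝ =>
      ∫ τ in (0:ℝ)..t,
        NormedSpace.exp (τ • x.1) * x.2 * NormedSpace.exp ((t - τ) • Ω p)) := by
    apply intervalIntegral.continuous_parametric_intervalIntegral_of_continuous'
      (f := fun (x : Matrix (Fin n) (Fin n) ℝ × Matrix (Fin n) (Fin n) ℝ) (τ : ℝ) =>
        NormedSpace.exp (τ • x.1) * x.2 * NormedSpace.exp ((t - τ) • Ω p))
    exact ((NormedSpace.exp_continuous.comp (by fun_prop)).mul (by fun_prop)).mul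
      (NormedSpace.exp_continuous.comp (by fun_prop))
  refine hasDerivAt_iff_tendsto_slope.mpr ?_
  have hslope : ∀ q : ℝ, slope (fun q : ℝ => NormedSpace.exp (t • Ω q)) p q
      = ∫ τ in (0:ℝ)..t,
          NormedSpace.exp (τ • Ω q) * slope Ω p q * NormedSpace.exp ((t - τ) • Ω p) := by
    intro q
    simp only [slope_def_module]
    rw [exp_sub_exp_eq_integral (Ω q) (Ω p) t, ← intervalIntegral.integral_smul]
    refine intervalIntegral.integral_congr fun τ _ => ?_
    rw [mul_smul_comm, smul_mul_assoc]
  have htend : Filter.Tendsto (fun q : ℝ => (Ω q, slope Ω p q)) (nhdsWithin p {p}ᶜ)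
      (nhds (Ω p, Ω')) := by
    rw [nhds_prod_eq]
    exact Filter.Tendsto.prodMk (hΩ.continuousAt.continuousWithinAt.tendsto)
      (hasDerivAt_iff_tendsto_slope.mp hΩ)
  have hcomp := (hΦcont.tendsto (Ω p, Ω')).comp htend
  exact Filter.Tendsto.congr (fun q => (hslope q).symm) hcomp
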